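/- Let n ≥ 2 be an integer and let f : ℕ → ℝ be any function. Then Σ_{λ ⊢ n} ((−1)^{ℓ(λ)}/z_λ) · (Σ_{i=1}^{ℓ(λ)} f(λ_i)) = f(n−1)/(n−1) − f(n)/n, the outer sum running over all integer partitions λ of n. -/

import Mathlib

open Finset

/-- `z_λ = ∏_j j^{m_j(λ)} · m_j(λ)!` where `m_j(λ)` is the number of parts of `λ`
equal to `j`. -/
def zPartition {n : ℕ} (P : Nat.Partition n) : ℕ :=
  ∏ j ∈ P.parts.toFinset, j ^ (P.parts.count j) * (P.parts.count j).factorial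


def zMul (s : Multiset ℕ) : ℕ :=
  ∏ j ∈ s.toFinset, j ^ (s.count j) * (s.count j).factorial

lemma zMul_pos (s : Multiset ℕ) (hs : ∀ a ∈ s, 0 < a) : 0 < zMul s := by
  apply Finset.prod_pos
  intro j hj
  have hj' : 0 < j := hs j (Multiset.mem_toFinset.mp hj)
  positivity

lemma zMul_cons (k : ℕ) (s : Multiset ℕ) :
    zMul (k ::ₘ s) = k * (s.count k + 1) * zMul s := by
  unfold zMul
  rw [Multiset.toFinset_cons]
  by_cases hk : k ∈ s.toFinset
  · rw [Finset.insert_eq_self.mpr hk]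
    rw [← Finset.mul_prod_erase s.toFinset _ hk, ← Finset.mul_prod_erase s.toFinset
      (fun j => j ^ (s.count j) * (s.count j).factorial) hk]
    have hrest : ∏ j ∈ s.toFinset.erase k, j ^ ((k ::ₘ s).count j) * ((k ::ₘ s).count j).factorial
        = ∏ j ∈ s.toFinset.erase k, j ^ (s.count j) * (s.count j).factorial := by
      apply Finset.prod_congr rfl
      intro j hj
      rw [Multiset.count_cons_of_ne (Finset.ne_of_mem_erase hj)]
    rw [hrest, Multiset.count_cons_self, pow_succ, Nat.factorial_succ]
    ring
  · have hc : s.count k = 0 := by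
      rwa [Multiset.count_eq_zero, ← Multiset.mem_toFinset]
    rw [Finset.prod_insert hk, Multiset.count_cons_self, hc]
    have hrest : ∏ j ∈ s.toFinset, j ^ ((k ::ₘ s).count j) * ((k ::ₘ s).count j).factorial
        = ∏ j ∈ s.toFinset, j ^ (s.count j) * (s.count j).factorial := by
      apply Finset.prod_congr rfl
      intro j hj
      rw [Multiset.count_cons_of_ne]
      intro h; exact hk (h ▸ hj)
    rw [hrest]
    simp

noncomputable def Apart (m : ℕ) : ℝ :=
  ∑ P : Nat.Partition m, (-1 : ℝ) ^ (Multiset.card P.parts) / (zMul P.parts : ℝ)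

lemma zMul_parts_pos {n : ℕ} (P : Nat.Partition n) : 0 < zMul P.parts :=
  zMul_pos _ (fun _ ha => P.parts_pos ha)

noncomputable def term {n : ℕ} (P : Nat.Partition n) : ℝ :=
  (-1 : ℝ) ^ (Multiset.card P.parts) / (zMul P.parts : ℝ)

def removePart {n : ℕ} (k : ℕ) (P : Nat.Partition n) (hP : k ∈ P.parts) :
    Nat.Partition (n - k) where
  parts := P.parts.erase k
  parts_pos := fun ha => P.parts_pos (Multiset.mem_of_mem_erase ha)
  parts_sum := by
    have h := Multiset.sum_erase hP
    have h2 := P.parts_sum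
    omega

def addPart {n : ℕ} (k : ℕ) (hkn : k ≤ n) (Q : Nat.Partition (n - k)) (hk : 1 ≤ k) :
    Nat.Partition n where
  parts := k ::ₘ Q.parts
  parts_pos := fun hi => by
    rcases Multiset.mem_cons.mp hi with h | h
    · exact h ▸ hk
    · exact Q.parts_pos h
  parts_sum := by
    rw [Multiset.sum_cons, Q.parts_sum]
    omega

lemma count_sum (n k : ℕ) (hk : 1 ≤ k) (hkn : k ≤ n) :
    ∑ P : Nat.Partition n, term P * (P.parts.count k : ℝ)
      = -(1 / k) * Apart (n - k) := by
  classical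
  have hsub : ∑ P : Nat.Partition n, term P * (P.parts.count k : ℝ)
      = ∑ P ∈ Finset.univ.filter (fun P : Nat.Partition n => k ∈ P.parts),
          term P * (P.parts.count k : ℝ) := by
    refine (Finset.sum_subset (Finset.filter_subset _ _) ?_).symm
    intro P _ hP
    simp only [Finset.mem_filter, Finset.mem_univ, true_and] at hP
    rw [Multiset.count_eq_zero_of_notMem hP]
    simp
  rw [hsub, Apart, Finset.mul_sum]
  refine Finset.sum_bij'
    (fun P hP => removePart k P (by simpa using hP))
    (fun Q _ => addPart k hkn Q hk) ?_ ?_ ?_ ?_ ?_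
  · intro P hP; exact Finset.mem_univ _
  · intro Q _
    simp only [Finset.mem_filter, Finset.mem_univ, true_and]
    exact Multiset.mem_cons_self _ _
  · intro P hP
    simp only [Finset.mem_filter, Finset.mem_univ, true_and] at hP
    exact Nat.Partition.ext (Multiset.cons_erase hP)
  · intro Q _
    exact Nat.Partition.ext (Multiset.erase_cons_head _ _)
  · intro P hP
    simp only [Finset.mem_filter, Finset.mem_univ, true_and] at hP
    set s := P.parts.erase k with hs
    have hps : P.parts = k ::ₘ s := (Multiset.cons_erase hP).symm
    have hz : zMul P.parts = k * (s.count k + 1) * zMul s := by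
      rw [hps, zMul_cons]
    have hcard : Multiset.card P.parts = Multiset.card s + 1 := by
      rw [hps]; simp
    have hcount : P.parts.count k = s.count k + 1 := by
      rw [hps, Multiset.count_cons_self]
    have hzs : (0 : ℝ) < zMul s := by
      have : 0 < zMul s := zMul_pos _ (fun a ha =>
        P.parts_pos (Multiset.mem_of_mem_erase ha))
      exact_mod_cast this
    have hk0 : (0 : ℝ) < k := by exact_mod_cast hk
    have hrp : (removePart k P hP).parts = s := rfl
    rw [term, hz, hcard, hcount, hrp]
    push_cast
    field_simp
    ring

lemma map_sum_expand {n : ℕ} (P : Nat.Partition n) (f : ℕ → ℝ) :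
    (P.parts.map f).sum = ∑ k ∈ Finset.Icc 1 n, (P.parts.count k : ℝ) * f k := by
  rw [Finset.sum_multiset_map_count]
  have hss : P.parts.toFinset ⊆ Finset.Icc 1 n := by
    intro a ha
    rw [Multiset.mem_toFinset] at ha
    refine Finset.mem_Icc.mpr ⟨P.parts_pos ha, ?_⟩
    have := Multiset.single_le_sum (fun x _ => Nat.zero_le x) a ha
    rw [P.parts_sum] at this
    exact this
  rw [Finset.sum_subset hss (fun k _ hk => by
    rw [Multiset.count_eq_zero_of_notMem (by simpa [Multiset.mem_toFinset] using hk)]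
    simp)]
  exact Finset.sum_congr rfl fun k _ => by rw [nsmul_eq_mul]

lemma main_expand (n : ℕ) (f : ℕ → ℝ) :
    ∑ P : Nat.Partition n, term P * (P.parts.map f).sum
      = ∑ k ∈ Finset.Icc 1 n, -(1 / k) * Apart (n - k) * f k := by
  have h1 : ∀ P : Nat.Partition n, term P * (P.parts.map f).sum
      = ∑ k ∈ Finset.Icc 1 n, (term P * (P.parts.count k : ℝ)) * f k := by
    intro P
    rw [map_sum_expand P f, Finset.mul_sum]
    exact Finset.sum_congr rfl fun k _ => by ring
  simp_rw [h1]
  rw [Finset.sum_comm]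
  refine Finset.sum_congr rfl fun k hk => ?_
  rw [Finset.mem_Icc] at hk
  rw [← Finset.sum_mul, count_sum n k hk.1 hk.2]

lemma apart_zero : Apart 0 = 1 := by
  rw [Apart, Fintype.sum_unique]
  have h : (default : Nat.Partition 0).parts = 0 := by
    apply Multiset.eq_zero_of_forall_notMem
    intro a ha
    have h1 := (default : Nat.Partition 0).parts_pos ha
    have h2 := Multiset.single_le_sum (fun x _ => Nat.zero_le x) a ha
    rw [(default : Nat.Partition 0).parts_sum] at h2
    omega
  rw [h]
  simp [zMul]

lemma apart_one : Apart 1 = -1 := by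
  rw [Apart, Fintype.sum_unique]
  have h : (default : Nat.Partition 1).parts = {1} := by
    have h1 : (default : Nat.Partition 1).parts
        = Multiset.replicate (Multiset.card (default : Nat.Partition 1).parts) 1 := by
      rw [Multiset.eq_replicate_card]
      intro b hb
      have h2 := (default : Nat.Partition 1).parts_pos hb
      have h3 := Multiset.single_le_sum (fun x _ => Nat.zero_le x) b hb
      rw [(default : Nat.Partition 1).parts_sum] at h3
      omega
    have h4 : Multiset.card (default : Nat.Partition 1).parts = 1 := by
      have := (default : Nat.Partition 1).parts_sum
      rw [h1, Multiset.sum_replicate, smul_eq_mul, mul_one] at this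
      exact this
    rw [h1, h4]
    rfl
  rw [h]
  simp [zMul]

lemma apart_ge_two : ∀ m, 2 ≤ m → Apart m = 0 := by
  intro m
  induction m using Nat.strong_induction_on with
  | _ m ih =>
    intro hm
    have hrec : (m : ℝ) * Apart m = -∑ j ∈ Finset.range m, Apart j := by
      have h1 : ∑ P : Nat.Partition m, term P * ((P.parts.map (Nat.cast : ℕ → ℝ)).sum)
          = (m : ℝ) * Apart m := by
        have hc : ∀ P : Nat.Partition m,
            (P.parts.map (Nat.cast : ℕ → ℝ)).sum = (m : ℝ) := by
          intro P
          have h := Nat.cast_multiset_sum (R := ℝ) P.parts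
          rw [P.parts_sum] at h
          exact h.symm
        simp_rw [hc]
        rw [Apart, Finset.mul_sum]
        exact Finset.sum_congr rfl fun P _ => by rw [term]; ring
      rw [main_expand m (Nat.cast : ℕ → ℝ)] at h1
      have hre : ∑ k ∈ Finset.Icc 1 m, -(1 / (k:ℝ)) * Apart (m - k) * (k:ℝ)
          = ∑ j ∈ Finset.range m, -Apart j := by
        refine Finset.sum_nbij' (fun k => m - k) (fun j => m - j) ?_ ?_ ?_ ?_ ?_
        · intro k hk; simp only [Finset.mem_Icc] at hk
          simp only [Finset.mem_range]; omega
        · intro j hj; simp only [Finset.mem_range] at hj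
          simp only [Finset.mem_Icc]; omega
        · intro k hk; simp only [Finset.mem_Icc] at hk; omega
        · intro j hj; simp only [Finset.mem_range] at hj; omega
        · intro k hk
          simp only [Finset.mem_Icc] at hk
          have hk0 : (k : ℝ) ≠ 0 := Nat.cast_ne_zero.mpr (by omega)
          field_simp
      rw [hre, Finset.sum_neg_distrib] at h1
      exact h1.symm
    have hsum : ∑ j ∈ Finset.range m, Apart j = 0 := by
      rw [Finset.range_eq_Ico, ← Finset.sum_Ico_consecutive _ (by omega : 0 ≤ 2) (by omega : 2 ≤ m)]
      have h2 : ∑ j ∈ Finset.Ico 2 m, Apart j = 0 := by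
        apply Finset.sum_eq_zero
        intro j hj
        rw [Finset.mem_Ico] at hj
        exact ih j hj.2 hj.1
      rw [h2, add_zero]
      rw [show Finset.Ico 0 2 = {0, 1} from rfl]
      rw [Finset.sum_insert (by simp), Finset.sum_singleton, apart_zero, apart_one]
      ring
    rw [hsum, neg_zero] at hrec
    have hm0 : (m : ℝ) ≠ 0 := Nat.cast_ne_zero.mpr (by omega)
    exact (mul_eq_zero.mp hrec).resolve_left hm0


theorem moebius_inversion_over_partitions (n : ℕ) (hn : 2 ≤ n) (f : ℕ → ℝ) :
    ∑ P : Nat.Partition n,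
        ((-1 : ℝ) ^ (Multiset.card P.parts) / (zPartition P : ℝ)) * (P.parts.map f).sum
      = f (n - 1) / (n - 1) - f n / n := by
  have hLHS : ∑ P : Nat.Partition n,
      ((-1 : ℝ) ^ (Multiset.card P.parts) / (zPartition P : ℝ)) * (P.parts.map f).sum
      = ∑ k ∈ Finset.Icc 1 n, -(1 / k) * Apart (n - k) * f k := main_expand n f
  rw [hLHS]
  have hsub : ({n - 1, n} : Finset ℕ) ⊆ Finset.Icc 1 n := by
    intro x hx
    simp only [Finset.mem_insert, Finset.mem_singleton] at hx
    rw [Finset.mem_Icc]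
    omega
  rw [← Finset.sum_subset hsub (fun k hk hk' => ?_)]
  · rw [Finset.sum_insert (by simp only [Finset.mem_singleton]; omega),
      Finset.sum_singleton, show n - (n - 1) = 1 by omega, Nat.sub_self,
      apart_one, apart_zero,
      show ((n - 1 : ℕ) : ℝ) = (n : ℝ) - 1 by
        rw [Nat.cast_sub (by omega : 1 ≤ n)]; norm_num]
    ring
  · rw [Finset.mem_Icc] at hk
    simp only [Finset.mem_insert, Finset.mem_singleton] at hk'
    rw [apart_ge_two (n - k) (by omega)]
    ring
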